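/- Let u ∈ KL(Ω₁) with Kirchhoff-Love decomposition u = (ū₁,…,ū_{n-1}, u_n) − x_n(∂₁u_n,…,∂_{n-1}u_n, 0). Fix x' ∈ ω which is an approximate jump point of the map ψ := ∇u_n with ψ⁺(x') = a', ψ⁻(x') = b', a' ≠ b', and suppose (x', x_n) ∈ J_u is a jump point of u with traces a, b and the same (horizontal) normal. Then for every t ∈ (−1/2, 1/2) with a + (x_n − t)a' ≠ b + (x_n − t)b' (here a', b' are viewed in ℝⁿ with zero last component), the point (x', t) is also a jump point of u, with the same normal. In particular the set of t for which (x', t) ∉ J_u is finite (at most one point). -/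

import Mathlib

open MeasureTheory Set Filter
open scoped ENNReal

/-- Projection of `ℝ^{n+1}` onto the first `n` coordinates. -/
def projH (n : ℕ) (x : Fin (n + 1) → ℝ) : Fin n → ℝ := fun i => x i.castSucc

/-- One-sided approximate limit `a ∈ ℝ^m` of `f : ℝ^N → ℝ^m` at `x` in the half space
`{y : (y − x)·ν > 0}`: the set where `f` stays `ε`-away from `a` on that side has
vanishing density at `x`. -/
def HalfApLimV (N m : ℕ) (f : (Fin N → ℝ) → Fin m → ℝ) (x ν : Fin N → ℝ)
    (a : Fin m → ℝ) : Prop :=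
  ∀ ε > (0 : ℝ),
    Tendsto (fun r => volume {y | y ∈ Metric.ball x r ∧
        0 < ∑ i, ν i * (y i - x i) ∧ ε < dist (f y) a}
      / volume (Metric.ball x r))
      (nhdsWithin 0 (Set.Ioi (0 : ℝ))) (nhds 0)

/-- The affinely transported trace `a + s (a', 0)` appearing in the vertical
propagation of jumps. -/
def shiftTrace (n : ℕ) (a : Fin (n + 1) → ℝ) (a' : Fin n → ℝ) (s : ℝ) :
    Fin (n + 1) → ℝ :=
  fun i => a i + s * (Fin.snoc a' (0 : ℝ) : Fin (n + 1) → ℝ) i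

/-- Vertical propagation of jump points (used in Proposition 6).  Let
`u(x) = F(x') − x_n (ψ(x'), 0)` be a Kirchhoff–Love displacement on `ℝ^{n+1}`.  Fix
`x' ∈ ℝⁿ` which is an approximate jump point of `ψ = ∇u_n` with one-sided limits
`a' ≠ b'` and horizontal unit normal `ν'`, and suppose `(x', x_n)` is an approximate
jump point of `u` with traces `a, b`, `a ≠ b`, and the same horizontal normal
`(ν', 0)`.  Then for every `t` with
`a + (x_n − t)(a',0) ≠ b + (x_n − t)(b',0)`, the point `(x', t)` is an approximate jump
point of `u` with those one-sided limits and the same normal; and the exceptional set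
of `t` for which this fails contains at most one point. -/
lemma aux16 (n : ℕ)
    (u : (Fin (n + 1) → ℝ) → Fin (n + 1) → ℝ)
    (F : (Fin n → ℝ) → Fin (n + 1) → ℝ) (ψ : (Fin n → ℝ) → Fin n → ℝ)
    (hdecomp : ∀ x : Fin (n + 1) → ℝ, ∀ i : Fin (n + 1),
      u x i = F (projH n x) i - x (Fin.last n) * (Fin.snoc (ψ (projH n x)) (0 : ℝ) : Fin (n + 1) → ℝ) i)
    (x' νh α' : Fin n → ℝ) (xn t : ℝ) (α : Fin (n + 1) → ℝ)
    (hu : HalfApLimV (n + 1) (n + 1) u (Fin.snoc x' xn) (Fin.snoc νh (0 : ℝ)) α)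
    (hψ : HalfApLimV n n ψ x' νh α') :
    HalfApLimV (n + 1) (n + 1) u (Fin.snoc x' t) (Fin.snoc νh (0 : ℝ))
      (shiftTrace n α α' (xn - t)) := by
  set s := xn - t with hs_def
  by_cases hs0 : s = 0
  · have ht : t = xn := by rw [hs_def] at hs0; linarith
    have hsh : shiftTrace n α α' s = α := by
      funext i; simp [shiftTrace, hs0]
    rw [hsh, ht]; exact hu
  · intro ε hε
    have hsabs : 0 < |s| := abs_pos.mpr hs0
    set e : Fin (n + 1) → ℝ := Fin.snoc (fun _ => 0) s with he_def
    have hprojadd : ∀ y : Fin (n + 1) → ℝ, projH n (y + e) = projH n y := by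
      intro y; funext i; simp [projH, he_def, Fin.snoc_castSucc]
    have hlastadd : ∀ y : Fin (n + 1) → ℝ, (y + e) (Fin.last n) = y (Fin.last n) + s := by
      intro y; simp [he_def, Fin.snoc_last]
    -- key pointwise estimate
    have key : ∀ y : Fin (n + 1) → ℝ,
        dist (u y) (shiftTrace n α α' s)
          ≤ dist (u (y + e)) α + |s| * dist (ψ (projH n y)) α' := by
      intro y
      have hvec : u y - shiftTrace n α α' s
          = (u (y + e) - α) + s • ((Fin.snoc (ψ (projH n y)) (0 : ℝ) : Fin (n + 1) → ℝ)
              - (Fin.snoc α' (0 : ℝ) : Fin (n + 1) → ℝ)) := by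
        funext i
        simp only [Pi.add_apply, Pi.sub_apply, Pi.smul_apply, smul_eq_mul,
          hdecomp, shiftTrace, hprojadd, hlastadd]
        ring
      have hsnocle : ‖(Fin.snoc (ψ (projH n y)) (0 : ℝ) : Fin (n + 1) → ℝ)
            - (Fin.snoc α' (0 : ℝ) : Fin (n + 1) → ℝ)‖ ≤ dist (ψ (projH n y)) α' := by
        rw [dist_eq_norm]
        refine (pi_norm_le_iff_of_nonneg (norm_nonneg _)).2 ?_
        intro i
        refine Fin.lastCases ?_ (fun j => ?_) i
        · simp
        · simp only [Pi.sub_apply, Fin.snoc_castSucc]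
          exact norm_le_pi_norm (ψ (projH n y) - α') j
      calc dist (u y) (shiftTrace n α α' s) = ‖u y - shiftTrace n α α' s‖ := dist_eq_norm _ _
        _ = ‖(u (y + e) - α) + s • ((Fin.snoc (ψ (projH n y)) (0 : ℝ) : Fin (n + 1) → ℝ)
              - (Fin.snoc α' (0 : ℝ) : Fin (n + 1) → ℝ))‖ := by rw [hvec]
        _ ≤ ‖u (y + e) - α‖ + ‖s • ((Fin.snoc (ψ (projH n y)) (0 : ℝ) : Fin (n + 1) → ℝ)
              - (Fin.snoc α' (0 : ℝ) : Fin (n + 1) → ℝ))‖ := norm_add_le _ _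
        _ = ‖u (y + e) - α‖ + |s| * ‖(Fin.snoc (ψ (projH n y)) (0 : ℝ) : Fin (n + 1) → ℝ)
              - (Fin.snoc α' (0 : ℝ) : Fin (n + 1) → ℝ)‖ := by
            rw [norm_smul, Real.norm_eq_abs]
        _ ≤ dist (u (y + e)) α + |s| * dist (ψ (projH n y)) α' := by
            rw [dist_eq_norm]
            exact add_le_add le_rfl (mul_le_mul_of_nonneg_left hsnocle (abs_nonneg s))
    -- summation identity
    have hsum : ∀ (c : ℝ) (y : Fin (n + 1) → ℝ),
        ∑ i, (Fin.snoc νh (0 : ℝ) : Fin (n + 1) → ℝ) i * (y i - (Fin.snoc x' c : Fin (n + 1) → ℝ) i)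
          = ∑ i, νh i * (y i.castSucc - x' i) := by
      intro c y
      rw [Fin.sum_univ_castSucc]
      simp
    -- translation of balls
    have hdist_shift : ∀ y : Fin (n + 1) → ℝ,
        dist (y + e) (Fin.snoc x' xn) = dist y (Fin.snoc x' t) := by
      intro y
      have h : (y + e) - Fin.snoc x' xn = y - Fin.snoc x' t := by
        funext i
        refine Fin.lastCases ?_ (fun j => ?_) i
        · simp only [Pi.sub_apply, Pi.add_apply, he_def, Fin.snoc_last]
          rw [hs_def]; ring
        · simp [he_def, Fin.snoc_castSucc]
      rw [dist_eq_norm, dist_eq_norm, h]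
    have hproj_dist : ∀ y : Fin (n + 1) → ℝ,
        dist (projH n y) x' ≤ dist y (Fin.snoc x' t) := by
      intro y
      refine (dist_pi_le_iff dist_nonneg).2 fun i => ?_
      have h := dist_le_pi_dist y (Fin.snoc x' t) i.castSucc
      simpa [projH] using h
    have hlast_dist : ∀ y : Fin (n + 1) → ℝ,
        dist (y (Fin.last n)) t ≤ dist y (Fin.snoc x' t) := by
      intro y
      have h := dist_le_pi_dist y (Fin.snoc x' t) (Fin.last n)
      simpa using h
    have hε2 : (0 : ℝ) < ε / 2 := by positivity
    have hε3 : (0 : ℝ) < ε / (2 * |s|) := by positivity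
    have h1 := hu (ε / 2) hε2
    have h2 := hψ (ε / (2 * |s|)) hε3
    have hlim : Tendsto (fun r =>
        volume {y : Fin (n + 1) → ℝ | y ∈ Metric.ball (Fin.snoc x' xn : Fin (n + 1) → ℝ) r ∧
            0 < ∑ i, (Fin.snoc νh (0 : ℝ) : Fin (n + 1) → ℝ) i * (y i - (Fin.snoc x' xn : Fin (n + 1) → ℝ) i) ∧
            ε / 2 < dist (u y) α} / volume (Metric.ball (Fin.snoc x' xn : Fin (n + 1) → ℝ) r)
        + volume {y' : Fin n → ℝ | y' ∈ Metric.ball x' r ∧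
            0 < ∑ i, νh i * (y' i - x' i) ∧
            ε / (2 * |s|) < dist (ψ y') α'} / volume (Metric.ball x' r))
        (nhdsWithin 0 (Set.Ioi (0 : ℝ))) (nhds 0) := by
      have := h1.add h2
      simpa using this
    refine tendsto_of_tendsto_of_tendsto_of_le_of_le' tendsto_const_nhds hlim
      (Eventually.of_forall fun r => zero_le) ?_
    filter_upwards [self_mem_nhdsWithin] with r hr
    have hr : (0 : ℝ) < r := hr
    -- sets
    set E := MeasurableEquiv.piFinSuccAbove (fun _ : Fin (n + 1) => ℝ) (Fin.last n) with hE_def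
    set A := {y : Fin (n + 1) → ℝ | y ∈ Metric.ball (Fin.snoc x' t : Fin (n + 1) → ℝ) r ∧
        0 < ∑ i, (Fin.snoc νh (0 : ℝ) : Fin (n + 1) → ℝ) i * (y i - (Fin.snoc x' t : Fin (n + 1) → ℝ) i) ∧
        ε < dist (u y) (shiftTrace n α α' s)} with hA_def
    set Bs := {y : Fin (n + 1) → ℝ | y ∈ Metric.ball (Fin.snoc x' xn : Fin (n + 1) → ℝ) r ∧
        0 < ∑ i, (Fin.snoc νh (0 : ℝ) : Fin (n + 1) → ℝ) i * (y i - (Fin.snoc x' xn : Fin (n + 1) → ℝ) i) ∧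
        ε / 2 < dist (u y) α} with hB_def
    set Cs := {y' : Fin n → ℝ | y' ∈ Metric.ball x' r ∧
        0 < ∑ i, νh i * (y' i - x' i) ∧
        ε / (2 * |s|) < dist (ψ y') α'} with hC_def
    set Bm := toMeasurable volume Bs with hBm_def
    set Cm := toMeasurable volume Cs with hCm_def
    have hsubset : A ⊆ ((· + e) ⁻¹' Bm) ∪ (E ⁻¹' (Metric.ball t r ×ˢ Cm)) := by
      rintro y ⟨hyb, hyh, hyd⟩
      by_cases hcase : ε / 2 < dist (u (y + e)) α
      · left
        apply subset_toMeasurable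
        refine ⟨?_, ?_, hcase⟩
        · rw [Metric.mem_ball, hdist_shift y]
          exact hyb
        · rw [hsum xn]
          rw [hsum t] at hyh
          simpa [he_def] using hyh
      · right
        have hud : dist (u (y + e)) α ≤ ε / 2 := le_of_not_gt hcase
        have hψd : ε / (2 * |s|) < dist (ψ (projH n y)) α' := by
          have hk := key y
          have h' : ε / 2 < |s| * dist (ψ (projH n y)) α' := by linarith
          rw [div_lt_iff₀ (by positivity : (0 : ℝ) < 2 * |s|)]
          nlinarith
        have hEy : E y = (y (Fin.last n), projH n y) := by
          simp [hE_def, MeasurableEquiv.piFinSuccAbove]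
          rfl
        refine Set.mem_preimage.2 ?_
        rw [hEy]
        constructor
        · exact lt_of_le_of_lt (hlast_dist y) hyb
        · apply subset_toMeasurable
          refine ⟨lt_of_le_of_lt (hproj_dist y) hyb, ?_, hψd⟩
          rw [hsum t] at hyh
          exact hyh
    -- measure computations
    have hD : volume (E ⁻¹' (Metric.ball t r ×ˢ Cm)) = ENNReal.ofReal (2 * r) * volume Cs := by
      have hms : MeasurableSet (Metric.ball t r ×ˢ Cm) :=
        measurableSet_ball.prod (measurableSet_toMeasurable _ _)
      rw [(volume_preserving_piFinSuccAbove (fun _ : Fin (n + 1) => ℝ)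
        (Fin.last n)).measure_preimage hms.nullMeasurableSet]
      rw [Measure.volume_eq_prod, Measure.prod_prod, Real.volume_ball, measure_toMeasurable]
    have hBpre : volume ((· + e) ⁻¹' Bm) = volume Bs := by
      rw [measure_preimage_add_right, measure_toMeasurable]
    have hle : volume A ≤ volume Bs + ENNReal.ofReal (2 * r) * volume Cs := by
      calc volume A ≤ volume (((· + e) ⁻¹' Bm) ∪ (E ⁻¹' (Metric.ball t r ×ˢ Cm))) :=
            measure_mono hsubset
        _ ≤ volume ((· + e) ⁻¹' Bm) + volume (E ⁻¹' (Metric.ball t r ×ˢ Cm)) :=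
            measure_union_le _ _
        _ = _ := by rw [hBpre, hD]
    have hV0 : ENNReal.ofReal (2 * r) ≠ 0 := by
      simp only [ne_eq, ENNReal.ofReal_eq_zero, not_le]; linarith
    have hVtop : ENNReal.ofReal (2 * r) ≠ ⊤ := ENNReal.ofReal_ne_top
    have hball1 : ∀ c : Fin (n + 1) → ℝ,
        volume (Metric.ball c r) = ENNReal.ofReal (2 * r) ^ (n + 1) := by
      intro c
      rw [MeasureTheory.volume_pi_ball _ hr]
      simp [Real.volume_ball, Finset.prod_const]
    have hball2 : volume (Metric.ball x' r) = ENNReal.ofReal (2 * r) ^ n := by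
      rw [MeasureTheory.volume_pi_ball _ hr]
      simp [Real.volume_ball, Finset.prod_const]
    calc volume A / volume (Metric.ball (Fin.snoc x' t : Fin (n + 1) → ℝ) r)
        ≤ (volume Bs + ENNReal.ofReal (2 * r) * volume Cs) / volume (Metric.ball (Fin.snoc x' t : Fin (n + 1) → ℝ) r) :=
          ENNReal.div_le_div_right hle _
      _ = volume Bs / ENNReal.ofReal (2 * r) ^ (n + 1)
          + (ENNReal.ofReal (2 * r) * volume Cs) / (ENNReal.ofReal (2 * r) * ENNReal.ofReal (2 * r) ^ n) := by
          rw [hball1, ENNReal.add_div, pow_succ']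
      _ = volume Bs / volume (Metric.ball (Fin.snoc x' xn : Fin (n + 1) → ℝ) r)
          + volume Cs / volume (Metric.ball x' r) := by
          rw [ENNReal.mul_div_mul_left _ _ hV0 hVtop, hball1, hball2]

theorem stmt16 (n : ℕ)
    (u : (Fin (n + 1) → ℝ) → Fin (n + 1) → ℝ)
    (F : (Fin n → ℝ) → Fin (n + 1) → ℝ) (ψ : (Fin n → ℝ) → Fin n → ℝ)
    (hdecomp : ∀ x : Fin (n + 1) → ℝ, ∀ i : Fin (n + 1),
      u x i = F (projH n x) i - x (Fin.last n) * (Fin.snoc (ψ (projH n x)) (0 : ℝ) : Fin (n + 1) → ℝ) i)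
    (x' : Fin n → ℝ) (a' b' ν' : Fin n → ℝ)
    (hν' : ∑ i, (ν' i) ^ 2 = 1) (hab' : a' ≠ b')
    (hψp : HalfApLimV n n ψ x' ν' a') (hψm : HalfApLimV n n ψ x' (fun i => -ν' i) b')
    (xn : ℝ) (a b : Fin (n + 1) → ℝ) (hab : a ≠ b)
    (hup : HalfApLimV (n + 1) (n + 1) u (Fin.snoc x' xn) (Fin.snoc ν' (0 : ℝ)) a)
    (hum : HalfApLimV (n + 1) (n + 1) u (Fin.snoc x' xn)
      (fun i => -((Fin.snoc ν' (0 : ℝ) : Fin (n + 1) → ℝ) i)) b) :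
    (∀ t : ℝ,
      shiftTrace n a a' (xn - t) ≠ shiftTrace n b b' (xn - t) →
      HalfApLimV (n + 1) (n + 1) u (Fin.snoc x' t) (Fin.snoc ν' (0 : ℝ))
          (shiftTrace n a a' (xn - t)) ∧
        HalfApLimV (n + 1) (n + 1) u (Fin.snoc x' t)
          (fun i => -((Fin.snoc ν' (0 : ℝ) : Fin (n + 1) → ℝ) i)) (shiftTrace n b b' (xn - t))) ∧
    {t : ℝ | shiftTrace n a a' (xn - t) = shiftTrace n b b' (xn - t)}.Subsingleton := by
  constructor
  · intro t _
    constructor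
    · exact aux16 n u F ψ hdecomp x' ν' a' xn t a hup hψp
    · have hnorm : (fun i => -((Fin.snoc ν' (0 : ℝ) : Fin (n + 1) → ℝ) i))
          = (Fin.snoc (fun i => -ν' i) (0 : ℝ) : Fin (n + 1) → ℝ) := by
        funext i
        refine Fin.lastCases ?_ (fun j => ?_) i <;> simp
      rw [hnorm] at hum ⊢
      exact aux16 n u F ψ hdecomp x' (fun i => -ν' i) b' xn t b hum hψm
  · intro t₁ ht₁ t₂ ht₂
    obtain ⟨i, hi⟩ := Function.ne_iff.mp hab'
    have e₁ := congrFun ht₁ i.castSucc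
    have e₂ := congrFun ht₂ i.castSucc
    simp only [shiftTrace, Fin.snoc_castSucc] at e₁ e₂
    have hz : (t₂ - t₁) * (a' i - b' i) = 0 := by linear_combination e₁ - e₂
    rcases mul_eq_zero.mp hz with h | h
    · have := sub_eq_zero.mp h
      linarith
    · exact absurd (sub_eq_zero.mp h) hi
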